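/- If a = x n^{-1/2} > 0 and b = x (n-k)^{-1/2} with 1 ≤ k < n, then |Φ̄(b)/Φ̄(a) − 1| ≤ (b/a − 1)(a² + 1), where Φ̄ is the standard normal tail function. -/

import Mathlib

open MeasureTheory Real Set Filter Topology

/-- The standard normal density. -/
noncomputable def stdPhi (z : ℝ) : ℝ := (Real.sqrt (2 * Real.pi))⁻¹ * Real.exp (-z ^ 2 / 2)

/-- The standard normal tail `Φ̄(z) = ∫_z^∞ φ(u) du`. -/
noncomputable def PhiBar (z : ℝ) : ℝ := ∫ u in Set.Ioi z, stdPhi u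

lemma stdPhi_pos (z : ℝ) : 0 < stdPhi z := by
  unfold stdPhi
  have : 0 < Real.sqrt (2 * Real.pi) := Real.sqrt_pos.2 (by positivity)
  positivity

lemma stdPhi_eq : stdPhi = fun z => (Real.sqrt (2 * Real.pi))⁻¹ * Real.exp (-(1/2) * z ^ 2) := by
  funext z; unfold stdPhi; ring_nf

lemma stdPhi_integrable : Integrable stdPhi := by
  rw [stdPhi_eq]
  exact (integrable_exp_neg_mul_sq (by norm_num : (0:ℝ) < 1/2)).const_mul _

lemma stdPhi_continuous : Continuous stdPhi := by
  unfold stdPhi; fun_prop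

lemma stdPhi_tendsto : Tendsto stdPhi atTop (𝓝 0) := by
  rw [stdPhi_eq]
  have h1 : Tendsto (fun z : ℝ => -(1/2) * z ^ 2) atTop atBot := by
    exact (tendsto_pow_atTop (two_ne_zero)).const_mul_atTop_of_neg (by norm_num)
  simpa using (Real.tendsto_exp_atBot.comp h1).const_mul ((Real.sqrt (2 * Real.pi))⁻¹)

lemma stdPhi_hasDeriv (u : ℝ) : HasDerivAt stdPhi (-u * stdPhi u) u := by
  have h1 : HasDerivAt (fun z : ℝ => -z ^ 2 / 2) (-u) u := by
    have := ((hasDerivAt_pow 2 u).neg).div_const 2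
    simpa using this.congr_deriv (by ring)
  have h2 := (h1.exp).const_mul ((Real.sqrt (2 * Real.pi))⁻¹)
  show HasDerivAt (fun z : ℝ => (Real.sqrt (2 * Real.pi))⁻¹ * Real.exp (-z ^ 2 / 2)) (-u * stdPhi u) u
  refine h2.congr_deriv ?_
  unfold stdPhi; ring

/-- Mills ratio lower bound. -/
lemma mills (a : ℝ) (ha : 0 ≤ a) : a / (a ^ 2 + 1) * stdPhi a ≤ PhiBar a := by
  set g : ℝ → ℝ := fun u => stdPhi u * (u / (u ^ 2 + 1)) with hgdef
  set g' : ℝ → ℝ := fun u => stdPhi u * ((1 - u ^ 2) / (u ^ 2 + 1) ^ 2 - u ^ 2 / (u ^ 2 + 1))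
    with hg'def
  have hden : ∀ u : ℝ, (0:ℝ) < u ^ 2 + 1 := fun u => by positivity
  have hd : ∀ u : ℝ, HasDerivAt g (g' u) u := by
    intro u
    have h2 : HasDerivAt (fun u : ℝ => u / (u ^ 2 + 1))
        ((1 * (u ^ 2 + 1) - u * (2 * u)) / (u ^ 2 + 1) ^ 2) u := by
      exact (hasDerivAt_id u).div ((hasDerivAt_pow 2 u).add_const 1 |>.congr_deriv (by ring))
        (hden u).ne'
    have := (stdPhi_hasDeriv u).mul h2
    refine this.congr_deriv ?_
    simp only [hg'def]
    field_simp
    ring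
  have hkey : ∀ u : ℝ, stdPhi u + g' u = stdPhi u * (2 / (u ^ 2 + 1) ^ 2) := by
    intro u
    simp only [hg'def]
    field_simp
    ring
  have hg'cont : Continuous g' := by
    apply stdPhi_continuous.mul
    apply Continuous.sub
    · exact (continuous_const.sub (continuous_pow 2)).div (by continuity) fun u => by positivity
    · exact (continuous_pow 2).div (by continuity) fun u => (hden u).ne'
  have hg'int : IntegrableOn g' (Ioi a) := by
    apply Integrable.integrableOn
    apply Integrable.mono (stdPhi_integrable.const_mul 2) hg'cont.aestronglyMeasurable
    · filter_upwards with u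
      have h1 : |(1 - u ^ 2) / (u ^ 2 + 1) ^ 2| ≤ 1 := by
        rw [abs_div, abs_of_pos (by positivity : (0:ℝ) < (u ^ 2 + 1) ^ 2),
          div_le_one (by positivity)]
        rw [abs_le]; constructor <;> nlinarith [sq_nonneg u, sq_nonneg (u^2)]
      have h2 : |u ^ 2 / (u ^ 2 + 1)| ≤ 1 := by
        rw [abs_div, abs_of_pos (hden u), abs_of_nonneg (sq_nonneg u),
          div_le_one (hden u)]
        linarith
      have hφ := (stdPhi_pos u).le
      simp only [hg'def, Real.norm_eq_abs, abs_mul, abs_of_nonneg hφ]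
      calc stdPhi u * |(1 - u ^ 2) / (u ^ 2 + 1) ^ 2 - u ^ 2 / (u ^ 2 + 1)|
          ≤ stdPhi u * 2 := by
            apply mul_le_mul_of_nonneg_left _ hφ
            calc |(1 - u ^ 2) / (u ^ 2 + 1) ^ 2 - u ^ 2 / (u ^ 2 + 1)|
                ≤ |(1 - u ^ 2) / (u ^ 2 + 1) ^ 2| + |u ^ 2 / (u ^ 2 + 1)| := abs_sub _ _
              _ ≤ 2 := by linarith
        _ ≤ |2| * stdPhi u := by rw [abs_two]; linarith
  have hgtend : Tendsto g atTop (𝓝 0) := by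
    apply squeeze_zero' (g := stdPhi)
    · filter_upwards [eventually_ge_atTop (0:ℝ)] with u hu
      have : 0 ≤ u / (u ^ 2 + 1) := div_nonneg hu (hden u).le
      exact mul_nonneg (stdPhi_pos u).le this
    · filter_upwards [eventually_ge_atTop (0:ℝ)] with u hu
      have : u / (u ^ 2 + 1) ≤ 1 := by
        rw [div_le_one (hden u)]; nlinarith
      calc stdPhi u * (u / (u ^ 2 + 1)) ≤ stdPhi u * 1 :=
          mul_le_mul_of_nonneg_left this (stdPhi_pos u).le
        _ = stdPhi u := mul_one _
    · exact stdPhi_tendsto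
  have hint : ∫ u in Ioi a, g' u = 0 - g a :=
    integral_Ioi_of_hasDerivAt_of_tendsto' (fun u _ => hd u) hg'int hgtend
  have hsum : PhiBar a + (0 - g a) = ∫ u in Ioi a, (stdPhi u + g' u) := by
    rw [← hint, PhiBar, ← integral_add stdPhi_integrable.integrableOn hg'int]
  have hpos : 0 ≤ ∫ u in Ioi a, (stdPhi u + g' u) := by
    apply setIntegral_nonneg measurableSet_Ioi
    intro u _
    rw [hkey u]
    have := (stdPhi_pos u).le
    positivity
  have hga : g a = a / (a ^ 2 + 1) * stdPhi a := by simp only [hgdef]; ring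
  linarith [hsum ▸ hpos]

lemma PhiBar_nonneg (z : ℝ) : 0 ≤ PhiBar z :=
  setIntegral_nonneg measurableSet_Ioi fun u _ => (stdPhi_pos u).le

lemma PhiBar_sub (a b : ℝ) (hab : a ≤ b) :
    PhiBar a - PhiBar b = ∫ u in Set.Ioc a b, stdPhi u := by
  have h : Set.Ioi a = Set.Ioc a b ∪ Set.Ioi b := (Set.Ioc_union_Ioi_eq_Ioi hab).symm
  rw [PhiBar, PhiBar, h, setIntegral_union (Set.Ioc_disjoint_Ioi le_rfl) measurableSet_Ioi
    stdPhi_integrable.integrableOn stdPhi_integrable.integrableOn]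
  ring

theorem stmt8 (x : ℝ) (n k : ℕ) (hk : 1 ≤ k) (hkn : k < n)
    (a b : ℝ) (ha : a = x * ((n : ℝ)) ^ (-(1 : ℝ) / 2))
    (hb : b = x * (((n : ℝ) - (k : ℝ))) ^ (-(1 : ℝ) / 2))
    (hapos : 0 < a) :
    |PhiBar b / PhiBar a - 1| ≤ (b / a - 1) * (a ^ 2 + 1) := by
  have hn : (0:ℝ) < n := by exact_mod_cast Nat.zero_lt_of_lt hkn
  have hnk : (0:ℝ) < (n:ℝ) - (k:ℝ) := by
    have : (k:ℝ) < n := by exact_mod_cast hkn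
    linarith
  have hlt : (n:ℝ) - (k:ℝ) < (n:ℝ) := by
    have : (0:ℝ) < k := by exact_mod_cast hk
    linarith
  have hxpos : 0 < x := by
    have hp : (0:ℝ) < ((n:ℝ)) ^ (-(1:ℝ)/2) := Real.rpow_pos_of_pos hn _
    nlinarith [ha ▸ hapos]
  have hab : a < b := by
    rw [ha, hb]
    exact mul_lt_mul_of_pos_left
      (Real.rpow_lt_rpow_of_neg hnk hlt (by norm_num)) hxpos
  -- key bounds
  have hmills := mills a hapos.le
  have hφa := stdPhi_pos a
  have hPa : 0 < PhiBar a := lt_of_lt_of_le (by positivity) hmills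
  have hdiff : PhiBar a - PhiBar b = ∫ u in Set.Ioc a b, stdPhi u := PhiBar_sub a b hab.le
  have hbound : PhiBar a - PhiBar b ≤ (b - a) * stdPhi a := by
    rw [hdiff]
    have h1 : ∫ u in Set.Ioc a b, stdPhi u ≤ ∫ _u in Set.Ioc a b, stdPhi a := by
      apply setIntegral_mono_on stdPhi_integrable.integrableOn
        (integrableOn_const measure_Ioc_lt_top.ne) measurableSet_Ioc
      intro u hu
      unfold stdPhi
      apply mul_le_mul_of_nonneg_left _ (by positivity)
      apply Real.exp_le_exp.2
      have h1 : a ≤ u := hu.1.le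
      nlinarith [hapos]
    have h2 : ∫ _u in Set.Ioc a b, stdPhi a = (b - a) * stdPhi a := by
      rw [setIntegral_const, Real.volume_real_Ioc_of_le hab.le, smul_eq_mul]
    linarith
  have hPb0 : 0 ≤ PhiBar b := PhiBar_nonneg b
  have hPba : PhiBar b ≤ PhiBar a := by
    have h0 : 0 ≤ ∫ u in Set.Ioc a b, stdPhi u :=
      setIntegral_nonneg measurableSet_Ioc fun u _ => (stdPhi_pos u).le
    linarith [hdiff ▸ h0]
  have hratio : PhiBar b / PhiBar a ≤ 1 := div_le_one_of_le₀ hPba hPa.le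
  rw [abs_of_nonpos (by linarith)]
  have heq : -(PhiBar b / PhiBar a - 1) = (PhiBar a - PhiBar b) / PhiBar a := by
    field_simp
    ring
  rw [heq]
  have hstep : (PhiBar a - PhiBar b) / PhiBar a
      ≤ ((b - a) * stdPhi a) / (a / (a ^ 2 + 1) * stdPhi a) := by
    apply div_le_div₀ (by nlinarith) hbound (by positivity) hmills
  have heq2 : ((b - a) * stdPhi a) / (a / (a ^ 2 + 1) * stdPhi a)
      = (b / a - 1) * (a ^ 2 + 1) := by
    field_simp
  linarith [heq2 ▸ hstep]
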